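/- arXiv:2605.02941 — 5 statements merged into one kernel-verified Lean document; each statement's English description precedes it below -/
import Mathlib

section
/- Let h₁, h₂, j₁, j₂ ∈ ℂ and set p₁ := h₁ − j₁/2, p₂ := h₂ − j₂/2. Let f be a continuously differentiable complex-valued function on the domain D = {(w₁, w₂) ∈ ℝ² : w₁ > w₂} satisfying, at every point of D: (i) ∂₁f + ∂₂f = 0; (ii) w₁∂₁f + w₂∂₂f + (p₁ + p₂)f = 0; (iii) w₁²∂₁f + w₂²∂₂f + (2p₁w₁ + 2p₂w₂)f = 0. Then there exists C ∈ ℂ such that f(w₁, w₂) = C·(w₁ − w₂)^{−(p₁+p₂)} on D (principal complex power of the positive real w₁ − w₂), and moreover if p₁ ≠ p₂ then C = 0, i.e. f vanishes identically. -/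
/-- Solving the Ward identities for a 2-point function of bosonic ghost
primaries with charges `j₁, j₂` and weights `h₁, h₂`: any `C¹` solution on
`{w₁ > w₂}` is `C (w₁ - w₂) ^ (-(p₁ + p₂))` with `pᵢ = hᵢ - jᵢ/2`, and `C = 0`
unless `p₁ = p₂`. -/
theorem ghost_two_point_ward (h₁ h₂ j₁ j₂ : ℂ) (f : ℝ × ℝ → ℂ)
    (hf : ContDiffOn ℝ 1 f {p : ℝ × ℝ | p.2 < p.1})
    (hW1 : ∀ p ∈ {p : ℝ × ℝ | p.2 < p.1},
      fderiv ℝ f p (1, 0) + fderiv ℝ f p (0, 1) = 0)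
    (hW2 : ∀ p ∈ {p : ℝ × ℝ | p.2 < p.1},
      (p.1 : ℂ) * fderiv ℝ f p (1, 0) + (p.2 : ℂ) * fderiv ℝ f p (0, 1)
        + ((h₁ - j₁ / 2) + (h₂ - j₂ / 2)) * f p = 0)
    (hW3 : ∀ p ∈ {p : ℝ × ℝ | p.2 < p.1},
      (p.1 : ℂ) ^ 2 * fderiv ℝ f p (1, 0) + (p.2 : ℂ) ^ 2 * fderiv ℝ f p (0, 1)
        + (2 * (h₁ - j₁ / 2) * (p.1 : ℂ) + 2 * (h₂ - j₂ / 2) * (p.2 : ℂ)) * f p = 0) :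
    ∃ C : ℂ,
      (∀ p ∈ {p : ℝ × ℝ | p.2 < p.1},
        f p = C * ((p.1 - p.2 : ℝ) : ℂ) ^ (-((h₁ - j₁ / 2) + (h₂ - j₂ / 2))))
      ∧ ((h₁ - j₁ / 2) ≠ (h₂ - j₂ / 2) → C = 0) := by
  set p₁ : ℂ := h₁ - j₁ / 2 with hp₁
  set p₂ : ℂ := h₂ - j₂ / 2 with hp₂
  set s : ℂ := p₁ + p₂ with hs
  set D : Set (ℝ × ℝ) := {p : ℝ × ℝ | p.2 < p.1} with hDdef
  have hD : IsOpen D := isOpen_lt continuous_snd continuous_fst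
  have hDc : Convex ℝ D := by
    intro x hx y hy a b ha hb hab
    simp only [hDdef, Set.mem_setOf_eq] at hx hy ⊢
    simp only [Prod.fst_add, Prod.snd_add, Prod.smul_fst, Prod.smul_snd, smul_eq_mul]
    rcases eq_or_lt_of_le ha with h | h
    · have hb1 : b = 1 := by linarith
      simp [← h, hb1]; linarith
    · nlinarith [mul_nonneg hb (sub_nonneg.mpr hy.le)]
  -- differentiability
  have hdf : ∀ p ∈ D, HasFDerivAt f (fderiv ℝ f p) p := by
    intro p hp
    exact ((hf.differentiableOn one_ne_zero p hp).differentiableAt (hD.mem_nhds hp)).hasFDerivAt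
  -- basic derivative relations
  have key : ∀ p ∈ D,
      fderiv ℝ f p (0, 1) = -fderiv ℝ f p (1, 0) ∧
      ((p.1 : ℂ) - (p.2 : ℂ)) * fderiv ℝ f p (1, 0) = -s * f p := by
    intro p hp
    have h1 := hW1 p hp
    have h2 := hW2 p hp
    constructor
    · linear_combination h1
    · rw [show fderiv ℝ f p (0, 1) = -fderiv ℝ f p (1, 0) by linear_combination h1] at h2
      linear_combination h2
  -- if p₁ ≠ p₂ then f vanishes
  have hvanish : p₁ ≠ p₂ → ∀ p ∈ D, f p = 0 := by
    intro hne p hp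
    have h3 := hW3 p hp
    obtain ⟨k1, k2⟩ := key p hp
    rw [k1] at h3
    have hw : ((p.1 : ℂ) - (p.2 : ℂ)) ≠ 0 := by
      have : (p.2 : ℝ) < p.1 := hp
      simp only [ne_eq, sub_eq_zero]
      exact_mod_cast this.ne'
    have hmain : (p₁ - p₂) * ((p.1 : ℂ) - (p.2 : ℂ)) * f p = 0 := by
      linear_combination h3 - ((p.1 : ℂ) + (p.2 : ℂ)) * k2
    rcases mul_eq_zero.mp hmain with h | h
    · rcases mul_eq_zero.mp h with h' | h'
      · exact absurd (sub_eq_zero.mp h') hne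
      · exact absurd h' hw
    · exact h
  -- the auxiliary function g
  set g : ℝ × ℝ → ℂ := fun p => f p * Complex.exp (s * (Real.log (p.1 - p.2) : ℂ)) with hgdef
  have hg0 : ∀ p ∈ D, HasFDerivAt g (0 : (ℝ × ℝ) →L[ℝ] ℂ) p := by
    intro p hp
    have hw : (0 : ℝ) < p.1 - p.2 := sub_pos.mpr hp
    set U : (ℝ × ℝ) →L[ℝ] ℝ :=
      ContinuousLinearMap.fst ℝ ℝ ℝ - ContinuousLinearMap.snd ℝ ℝ ℝ with hU
    have hu : HasFDerivAt (fun q : ℝ × ℝ => q.1 - q.2) U p :=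
      hasFDerivAt_fst.sub hasFDerivAt_snd
    have hlog : HasFDerivAt (fun q : ℝ × ℝ => Real.log (q.1 - q.2))
        ((p.1 - p.2)⁻¹ • U) p :=
      by have := (Real.hasDerivAt_log hw.ne').comp_hasFDerivAt p hu; exact this
    have hof : HasFDerivAt (fun q : ℝ × ℝ => ((Real.log (q.1 - q.2) : ℝ) : ℂ))
        (Complex.ofRealCLM.comp ((p.1 - p.2)⁻¹ • U)) p :=
      Complex.ofRealCLM.hasFDerivAt.comp p hlog
    have hmul : HasFDerivAt (fun q : ℝ × ℝ => s * ((Real.log (q.1 - q.2) : ℝ) : ℂ))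
        (s • (Complex.ofRealCLM.comp ((p.1 - p.2)⁻¹ • U))) p := hof.const_mul s
    have hexp := hmul.cexp
    have hprod := (hdf p hp).mul hexp
    have hfin : (f p • (Complex.exp (s * ((Real.log (p.1 - p.2) : ℝ) : ℂ)) •
          (s • (Complex.ofRealCLM.comp ((p.1 - p.2)⁻¹ • U)))) +
        Complex.exp (s * ((Real.log (p.1 - p.2) : ℝ) : ℂ)) • fderiv ℝ f p)
        = (0 : (ℝ × ℝ) →L[ℝ] ℂ) := by
      obtain ⟨k1, k2⟩ := key p hp
      have hwC : ((p.1 : ℂ) - (p.2 : ℂ)) ≠ 0 := by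
        rw [← Complex.ofReal_sub]
        exact_mod_cast hw.ne'
      have hwi : ((((p.1 - p.2)⁻¹ : ℝ)) : ℂ) = ((p.1 : ℂ) - (p.2 : ℂ))⁻¹ := by
        push_cast
        ring
      ext
      · simp only [ContinuousLinearMap.comp_apply, ContinuousLinearMap.inl_apply,
          ContinuousLinearMap.add_apply, ContinuousLinearMap.smul_apply,
          ContinuousLinearMap.zero_apply, hU,
          ContinuousLinearMap.sub_apply, ContinuousLinearMap.coe_fst',
          ContinuousLinearMap.coe_snd', Complex.ofRealCLM_apply, smul_eq_mul]
        push_cast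
        field_simp
        linear_combination Complex.exp (s * ((Real.log (p.1 - p.2) : ℝ) : ℂ)) * k2
      · simp only [ContinuousLinearMap.comp_apply, ContinuousLinearMap.inr_apply,
          ContinuousLinearMap.add_apply, ContinuousLinearMap.smul_apply,
          ContinuousLinearMap.zero_apply, hU,
          ContinuousLinearMap.sub_apply, ContinuousLinearMap.coe_fst',
          ContinuousLinearMap.coe_snd', Complex.ofRealCLM_apply, smul_eq_mul, k1]
        push_cast
        field_simp
        linear_combination (-(Complex.exp (s * ((Real.log (p.1 - p.2) : ℝ) : ℂ)))) * k2
    rw [← hfin]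
    exact hprod
  -- g is constant on D
  have hgconst : ∀ p ∈ D, g p = g (1, 0) := by
    intro p hp
    have h10 : ((1 : ℝ), (0 : ℝ)) ∈ D := by simp [hDdef]
    have := hDc.norm_image_sub_le_of_norm_hasFDerivWithin_le
      (f' := fun _ => (0 : (ℝ × ℝ) →L[ℝ] ℂ)) (C := 0)
      (fun x hx => (hg0 x hx).hasFDerivWithinAt)
      (fun x _ => by simp) h10 hp
    have h0 : ‖g p - g (1, 0)‖ ≤ 0 := by simpa using this
    exact sub_eq_zero.mp (norm_le_zero_iff.mp h0)
  refine ⟨g (1, 0), fun p hp => ?_, fun hne => ?_⟩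
  · have hw : (0 : ℝ) < p.1 - p.2 := sub_pos.mpr hp
    have hgp := hgconst p hp
    have hwC : ((p.1 - p.2 : ℝ) : ℂ) ≠ 0 := by
      exact_mod_cast hw.ne'
    rw [Complex.cpow_def_of_ne_zero hwC]
    rw [← Complex.ofReal_log hw.le]
    have hg10 : g (1, 0) = f (1, 0) := by simp [hgdef]
    simp only [hgdef, Real.log_one] at hgp
    norm_num at hgp
    rw [hg10, ← hgp, mul_assoc, ← Complex.exp_add,
      show s * ((Real.log (p.1 - p.2) : ℝ) : ℂ) + ((Real.log (p.1 - p.2) : ℝ) : ℂ) * -s = 0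
        by ring, Complex.exp_zero, mul_one]
  · have h10 : ((1 : ℝ), (0 : ℝ)) ∈ D := by simp [hDdef]
    have := hvanish hne _ h10
    simp [hgdef, this]
end

section
/- Let h₁, h₂, h₃, j₁, j₂, j₃ ∈ ℂ and set p_i := h_i − j_i/2 for i = 1, 2, 3. Let f be a continuously differentiable complex-valued function on D = {(w₁, w₂, w₃) ∈ ℝ³ : w₁ > w₂ > w₃} satisfying at every point of D: (i) ∑_{i=1}^{3} ∂_i f = 0; (ii) ∑_{i=1}^{3} (w_i ∂_i f + p_i f) = 0; (iii) ∑_{i=1}^{3} (w_i² ∂_i f + 2 p_i w_i f) = 0. Then there exists C ∈ ℂ such that f(w₁, w₂, w₃) = C·(w₁−w₂)^{p₃−p₁−p₂}·(w₁−w₃)^{p₂−p₁−p₃}·(w₂−w₃)^{p₁−p₂−p₃} on D. -/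
open Complex

/-- Derivative of `t ↦ (t : ℂ) ^ s` at a positive real `t`. -/
lemma aux_cpow_hasDerivAt (s : ℂ) {t : ℝ} (ht : 0 < t) :
    HasDerivAt (fun t : ℝ => (t : ℂ) ^ s) (s * (t : ℂ) ^ s / t) t := by
  have hlog : HasDerivAt (fun t : ℝ => ((Real.log t : ℝ) : ℂ)) ((t⁻¹ : ℝ) : ℂ) t :=
    (Real.hasDerivAt_log ht.ne').ofReal_comp
  have hexp : HasDerivAt (fun t : ℝ => Complex.exp ((Real.log t : ℂ) * s))
      (Complex.exp ((Real.log t : ℂ) * s) * (((t⁻¹ : ℝ) : ℂ) * s)) t :=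
    (hlog.mul_const s).cexp
  have heq : (fun t : ℝ => Complex.exp ((Real.log t : ℂ) * s)) =ᶠ[nhds t]
      (fun t : ℝ => (t : ℂ) ^ s) := by
    filter_upwards [eventually_gt_nhds ht] with x hx
    rw [Complex.cpow_def_of_ne_zero (by exact_mod_cast hx.ne' : (x : ℂ) ≠ 0),
      Complex.ofReal_log hx.le]
  have h := hexp.congr_of_eventuallyEq heq.symm
  refine h.congr_deriv ?_
  rw [Complex.cpow_def_of_ne_zero (by exact_mod_cast ht.ne' : (t : ℂ) ≠ 0),
    Complex.ofReal_log ht.le]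
  push_cast
  ring

/-- Fréchet derivative of `w ↦ ((w i - w j : ℝ) : ℂ) ^ s`. -/
lemma aux_factor (s : ℂ) (i j : Fin 3) {w : Fin 3 → ℝ} (h : w j < w i) :
    HasFDerivAt (fun w : Fin 3 → ℝ => ((w i - w j : ℝ) : ℂ) ^ s)
      ((((ContinuousLinearMap.proj i : (Fin 3 → ℝ) →L[ℝ] ℝ)
          - (ContinuousLinearMap.proj j : (Fin 3 → ℝ) →L[ℝ] ℝ))).smulRight
        (s * ((w i - w j : ℝ) : ℂ) ^ s / ((w i - w j : ℝ) : ℂ))) w := by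
  have ht : 0 < w i - w j := sub_pos.2 h
  have hd := (aux_cpow_hasDerivAt s ht).hasFDerivAt
  have hL : HasFDerivAt (fun w : Fin 3 → ℝ => w i - w j)
      ((ContinuousLinearMap.proj i : (Fin 3 → ℝ) →L[ℝ] ℝ)
        - (ContinuousLinearMap.proj j : (Fin 3 → ℝ) →L[ℝ] ℝ)) w :=
    ((ContinuousLinearMap.proj i : (Fin 3 → ℝ) →L[ℝ] ℝ)
        - (ContinuousLinearMap.proj j : (Fin 3 → ℝ) →L[ℝ] ℝ)).hasFDerivAt
  have hcomp := hd.comp w hL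
  exact hcomp.congr_fderiv (ContinuousLinearMap.ext fun v => by simp; ring)

/-- Total derivative data for the Koba-Nielsen style factor. -/
lemma aux_Phi (A B Cc : ℂ) {w : Fin 3 → ℝ} (h21 : w 2 < w 1) (h10 : w 1 < w 0) :
    ∃ DΦ : (Fin 3 → ℝ) →L[ℝ] ℂ,
      HasFDerivAt (fun w : Fin 3 → ℝ =>
        ((w 0 - w 1 : ℝ) : ℂ) ^ A * ((w 0 - w 2 : ℝ) : ℂ) ^ B * ((w 1 - w 2 : ℝ) : ℂ) ^ Cc) DΦ w
      ∧ DΦ (Pi.single 0 1) = (A / ((w 0 - w 1 : ℝ) : ℂ) + B / ((w 0 - w 2 : ℝ) : ℂ))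
          * (((w 0 - w 1 : ℝ) : ℂ) ^ A * ((w 0 - w 2 : ℝ) : ℂ) ^ B * ((w 1 - w 2 : ℝ) : ℂ) ^ Cc)
      ∧ DΦ (Pi.single 1 1) = (-(A / ((w 0 - w 1 : ℝ) : ℂ)) + Cc / ((w 1 - w 2 : ℝ) : ℂ))
          * (((w 0 - w 1 : ℝ) : ℂ) ^ A * ((w 0 - w 2 : ℝ) : ℂ) ^ B * ((w 1 - w 2 : ℝ) : ℂ) ^ Cc)
      ∧ DΦ (Pi.single 2 1) = (-(B / ((w 0 - w 2 : ℝ) : ℂ)) - Cc / ((w 1 - w 2 : ℝ) : ℂ))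
          * (((w 0 - w 1 : ℝ) : ℂ) ^ A * ((w 0 - w 2 : ℝ) : ℂ) ^ B * ((w 1 - w 2 : ℝ) : ℂ) ^ Cc) := by
  have h20 : w 2 < w 0 := h21.trans h10
  have n1 : ((w 0 - w 1 : ℝ) : ℂ) ≠ 0 := by exact_mod_cast (sub_pos.2 h10).ne'
  have n2 : ((w 0 - w 2 : ℝ) : ℂ) ≠ 0 := by exact_mod_cast (sub_pos.2 h20).ne'
  have n3 : ((w 1 - w 2 : ℝ) : ℂ) ≠ 0 := by exact_mod_cast (sub_pos.2 h21).ne'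
  have hF1 := aux_factor A 0 1 h10
  have hF2 := aux_factor B 0 2 h20
  have hF3 := aux_factor Cc 1 2 h21
  refine ⟨_, (hF1.mul hF2).mul hF3, ?_, ?_, ?_⟩ <;>
  · simp only [ContinuousLinearMap.add_apply, ContinuousLinearMap.smul_apply,
      ContinuousLinearMap.smulRight_apply, ContinuousLinearMap.sub_apply,
      ContinuousLinearMap.proj_apply, smul_eq_mul, Pi.single_apply]
    norm_num [Fin.ext_iff]
    field_simp
    ring

/-- Solving the linear system given by the Ward identities. -/
lemma aux_div2 (d X Y a b fw : ℂ) (hX : X ≠ 0) (hY : Y ≠ 0)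
    (h : d * (X * Y) = (a * Y + b * X) * fw) : d = (a / X + b / Y) * fw := by
  field_simp
  linear_combination h

lemma aux_ward_solve (p₁ p₂ p₃ fw d₀ d₁ d₂ W₀ W₁ W₂ : ℂ)
    (hne01 : W₀ - W₁ ≠ 0) (hne02 : W₀ - W₂ ≠ 0) (hne12 : W₁ - W₂ ≠ 0)
    (e1 : d₀ + d₁ + d₂ = 0)
    (e2 : (W₀ * d₀ + p₁ * fw) + (W₁ * d₁ + p₂ * fw) + (W₂ * d₂ + p₃ * fw) = 0)
    (e3 : (W₀ ^ 2 * d₀ + 2 * p₁ * W₀ * fw) + (W₁ ^ 2 * d₁ + 2 * p₂ * W₁ * fw)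
      + (W₂ ^ 2 * d₂ + 2 * p₃ * W₂ * fw) = 0) :
    d₀ = ((p₃ - p₁ - p₂) / (W₀ - W₁) + (p₂ - p₁ - p₃) / (W₀ - W₂)) * fw ∧
    d₁ = (-((p₃ - p₁ - p₂) / (W₀ - W₁)) + (p₁ - p₂ - p₃) / (W₁ - W₂)) * fw ∧
    d₂ = (-((p₂ - p₁ - p₃) / (W₀ - W₂)) - (p₁ - p₂ - p₃) / (W₁ - W₂)) * fw := by
  have h0 : d₀ * ((W₀ - W₁) * (W₀ - W₂))
      = ((p₃ - p₁ - p₂) * (W₀ - W₂) + (p₂ - p₁ - p₃) * (W₀ - W₁)) * fw := by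
    linear_combination W₁ * W₂ * e1 - (W₁ + W₂) * e2 + e3
  have h1 : d₁ * ((W₀ - W₁) * (W₁ - W₂))
      = (-(p₃ - p₁ - p₂) * (W₁ - W₂) + (p₁ - p₂ - p₃) * (W₀ - W₁)) * fw := by
    linear_combination (-(W₀ * W₂)) * e1 + (W₀ + W₂) * e2 - e3
  have h2 : d₂ * ((W₀ - W₂) * (W₁ - W₂))
      = (-(p₂ - p₁ - p₃) * (W₁ - W₂) + -(p₁ - p₂ - p₃) * (W₀ - W₂)) * fw := by
    linear_combination W₀ * W₁ * e1 - (W₀ + W₁) * e2 + e3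
  refine ⟨?_, ?_, ?_⟩
  · exact aux_div2 _ _ _ _ _ _ hne01 hne02 h0
  · have := aux_div2 _ _ _ _ _ _ hne01 hne12 h1
    rw [this]; ring
  · have := aux_div2 _ _ _ _ _ _ hne02 hne12 h2
    rw [this]; ring

/-- A continuous linear map on `Fin 3 → ℝ` vanishing on the basis vectors is zero. -/
lemma aux_clm_zero (l : (Fin 3 → ℝ) →L[ℝ] ℂ)
    (h : ∀ k : Fin 3, l (Pi.single k 1) = 0) : l = 0 := by
  ext v
  have hv : v = ∑ k : Fin 3, v k • (Pi.single k 1 : Fin 3 → ℝ) := by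
    ext m
    rw [Finset.sum_apply]
    simp [Pi.single_apply]
  have h2 := congrArg l hv
  rw [h2, map_sum]
  simp [h]

lemma aux_cancel (a φ fw : ℂ) (hφ : φ ≠ 0) :
    fw * (-(φ ^ 2)⁻¹ * (a * φ)) + φ⁻¹ * (a * fw) = 0 := by
  field_simp
  ring

/-- The partial derivative in the `i`-th direction of a function of three
real variables. -/
noncomputable def pderiv3 (F : (Fin 3 → ℝ) → ℂ) (i : Fin 3) (w : Fin 3 → ℝ) : ℂ :=
  fderiv ℝ F w (Pi.single i 1)

/-- Solving the Ward identities for a 3-point function of bosonic ghost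
primaries with charges `jᵢ` and weights `hᵢ`: any `C¹` solution on
`{w₁ > w₂ > w₃}` is a constant multiple of
`(w₁-w₂)^(p₃-p₁-p₂) (w₁-w₃)^(p₂-p₁-p₃) (w₂-w₃)^(p₁-p₂-p₃)`
with `pᵢ = hᵢ - jᵢ/2`. -/
theorem ghost_three_point_ward (h₁ h₂ h₃ j₁ j₂ j₃ : ℂ) (f : (Fin 3 → ℝ) → ℂ)
    (hf : ContDiffOn ℝ 1 f {w : Fin 3 → ℝ | w 2 < w 1 ∧ w 1 < w 0})
    (hW1 : ∀ w ∈ {w : Fin 3 → ℝ | w 2 < w 1 ∧ w 1 < w 0},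
      pderiv3 f 0 w + pderiv3 f 1 w + pderiv3 f 2 w = 0)
    (hW2 : ∀ w ∈ {w : Fin 3 → ℝ | w 2 < w 1 ∧ w 1 < w 0},
      ((w 0 : ℂ) * pderiv3 f 0 w + (h₁ - j₁ / 2) * f w)
        + ((w 1 : ℂ) * pderiv3 f 1 w + (h₂ - j₂ / 2) * f w)
        + ((w 2 : ℂ) * pderiv3 f 2 w + (h₃ - j₃ / 2) * f w) = 0)
    (hW3 : ∀ w ∈ {w : Fin 3 → ℝ | w 2 < w 1 ∧ w 1 < w 0},
      ((w 0 : ℂ) ^ 2 * pderiv3 f 0 w + 2 * (h₁ - j₁ / 2) * (w 0 : ℂ) * f w)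
        + ((w 1 : ℂ) ^ 2 * pderiv3 f 1 w + 2 * (h₂ - j₂ / 2) * (w 1 : ℂ) * f w)
        + ((w 2 : ℂ) ^ 2 * pderiv3 f 2 w + 2 * (h₃ - j₃ / 2) * (w 2 : ℂ) * f w) = 0) :
    ∃ C : ℂ, ∀ w ∈ {w : Fin 3 → ℝ | w 2 < w 1 ∧ w 1 < w 0},
      f w = C * ((w 0 - w 1 : ℝ) : ℂ) ^ ((h₃ - j₃ / 2) - (h₁ - j₁ / 2) - (h₂ - j₂ / 2))
        * ((w 0 - w 2 : ℝ) : ℂ) ^ ((h₂ - j₂ / 2) - (h₁ - j₁ / 2) - (h₃ - j₃ / 2))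
        * ((w 1 - w 2 : ℝ) : ℂ) ^ ((h₁ - j₁ / 2) - (h₂ - j₂ / 2) - (h₃ - j₃ / 2)) := by
  set D : Set (Fin 3 → ℝ) := {w : Fin 3 → ℝ | w 2 < w 1 ∧ w 1 < w 0} with hD
  set Φ : (Fin 3 → ℝ) → ℂ := fun w =>
    ((w 0 - w 1 : ℝ) : ℂ) ^ ((h₃ - j₃ / 2) - (h₁ - j₁ / 2) - (h₂ - j₂ / 2))
      * ((w 0 - w 2 : ℝ) : ℂ) ^ ((h₂ - j₂ / 2) - (h₁ - j₁ / 2) - (h₃ - j₃ / 2))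
      * ((w 1 - w 2 : ℝ) : ℂ) ^ ((h₁ - j₁ / 2) - (h₂ - j₂ / 2) - (h₃ - j₃ / 2)) with hΦdef
  have ne_pow : ∀ (x s : ℂ), x ≠ 0 → x ^ s ≠ 0 := fun x s hx hcon =>
    hx ((cpow_eq_zero_iff x s).1 hcon).1
  have hDopen : IsOpen D :=
    (isOpen_lt (continuous_apply 2) (continuous_apply 1)).inter
      (isOpen_lt (continuous_apply 1) (continuous_apply 0))
  have hDconv : Convex ℝ D := by
    have hcv1 : Convex ℝ {w : Fin 3 → ℝ | w 2 < w 1} := by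
      have hset : {w : Fin 3 → ℝ | w 2 < w 1} = {w : Fin 3 → ℝ | w 2 - w 1 < 0} := by
        ext w; simp [sub_neg]
      rw [hset]
      exact convex_halfSpace_lt
        ⟨fun a b => by simp only [Pi.add_apply]; ring,
         fun c a => by simp only [Pi.smul_apply, smul_eq_mul]; ring⟩ 0
    have hcv2 : Convex ℝ {w : Fin 3 → ℝ | w 1 < w 0} := by
      have hset : {w : Fin 3 → ℝ | w 1 < w 0} = {w : Fin 3 → ℝ | w 1 - w 0 < 0} := by
        ext w; simp [sub_neg]
      rw [hset]
      exact convex_halfSpace_lt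
        ⟨fun a b => by simp only [Pi.add_apply]; ring,
         fun c a => by simp only [Pi.smul_apply, smul_eq_mul]; ring⟩ 0
    have hDeq : D = {w : Fin 3 → ℝ | w 2 < w 1} ∩ {w : Fin 3 → ℝ | w 1 < w 0} := by
      ext w; simp [hD]
    rw [hDeq]; exact hcv1.inter hcv2
  have hΦne : ∀ w ∈ D, Φ w ≠ 0 := by
    intro w hw
    obtain ⟨h21, h10⟩ := hw
    have h20 : w 2 < w 0 := h21.trans h10
    have n1 : ((w 0 - w 1 : ℝ) : ℂ) ≠ 0 := by exact_mod_cast (sub_pos.2 h10).ne'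
    have n2 : ((w 0 - w 2 : ℝ) : ℂ) ≠ 0 := by exact_mod_cast (sub_pos.2 h20).ne'
    have n3 : ((w 1 - w 2 : ℝ) : ℂ) ≠ 0 := by exact_mod_cast (sub_pos.2 h21).ne'
    exact mul_ne_zero (mul_ne_zero (ne_pow _ _ n1) (ne_pow _ _ n2)) (ne_pow _ _ n3)
  -- the key step : f / Φ has vanishing derivative on D
  have key : ∀ w ∈ D, HasFDerivAt (fun w => f w * (Φ w)⁻¹)
      (0 : (Fin 3 → ℝ) →L[ℝ] ℂ) w := by
    intro w hw
    obtain ⟨h21, h10⟩ := hw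
    have h20 : w 2 < w 0 := h21.trans h10
    have n1 : ((w 0 - w 1 : ℝ) : ℂ) ≠ 0 := by exact_mod_cast (sub_pos.2 h10).ne'
    have n2 : ((w 0 - w 2 : ℝ) : ℂ) ≠ 0 := by exact_mod_cast (sub_pos.2 h20).ne'
    have n3 : ((w 1 - w 2 : ℝ) : ℂ) ≠ 0 := by exact_mod_cast (sub_pos.2 h21).ne'
    have hΦn : Φ w ≠ 0 := hΦne w ⟨h21, h10⟩
    have c1 : ((w 0 - w 1 : ℝ) : ℂ) = (w 0 : ℂ) - (w 1 : ℂ) := by push_cast; ring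
    have c2 : ((w 0 - w 2 : ℝ) : ℂ) = (w 0 : ℂ) - (w 2 : ℂ) := by push_cast; ring
    have c3 : ((w 1 - w 2 : ℝ) : ℂ) = (w 1 : ℂ) - (w 2 : ℂ) := by push_cast; ring
    obtain ⟨DΦ, hΦw, hv0, hv1, hv2⟩ :=
      aux_Phi ((h₃ - j₃ / 2) - (h₁ - j₁ / 2) - (h₂ - j₂ / 2))
        ((h₂ - j₂ / 2) - (h₁ - j₁ / 2) - (h₃ - j₃ / 2))
        ((h₁ - j₁ / 2) - (h₂ - j₂ / 2) - (h₃ - j₃ / 2)) h21 h10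
    have hΦw' : HasFDerivAt Φ DΦ w := hΦw
    have hΦeq : Φ w = ((w 0 - w 1 : ℝ) : ℂ) ^ ((h₃ - j₃ / 2) - (h₁ - j₁ / 2) - (h₂ - j₂ / 2))
        * ((w 0 - w 2 : ℝ) : ℂ) ^ ((h₂ - j₂ / 2) - (h₁ - j₁ / 2) - (h₃ - j₃ / 2))
        * ((w 1 - w 2 : ℝ) : ℂ) ^ ((h₁ - j₁ / 2) - (h₂ - j₂ / 2) - (h₃ - j₃ / 2)) := by
      rw [hΦdef]
    rw [← hΦeq] at hv0 hv1 hv2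
    simp only [c1, c2, c3] at hv0 hv1 hv2
    -- Ward identities at w
    have e1 := hW1 w ⟨h21, h10⟩
    have e2 := hW2 w ⟨h21, h10⟩
    have e3 := hW3 w ⟨h21, h10⟩
    obtain ⟨hd0, hd1, hd2⟩ := aux_ward_solve (h₁ - j₁ / 2) (h₂ - j₂ / 2) (h₃ - j₃ / 2)
      (f w) (pderiv3 f 0 w) (pderiv3 f 1 w) (pderiv3 f 2 w)
      (w 0 : ℂ) (w 1 : ℂ) (w 2 : ℂ)
      (c1 ▸ n1) (c2 ▸ n2) (c3 ▸ n3) e1 e2 e3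
    -- derivative of f at w
    have hfd : HasFDerivAt f (fderiv ℝ f w) w :=
      ((hf.contDiffAt (hDopen.mem_nhds ⟨h21, h10⟩)).differentiableAt one_ne_zero).hasFDerivAt
    have hinv : HasFDerivAt (fun y => (Φ y)⁻¹) ((-(Φ w ^ 2)⁻¹) • DΦ) w :=
      (hasDerivAt_inv hΦn).comp_hasFDerivAt w hΦw'
    have hg := hfd.mul hinv
    have hzero : f w • ((-(Φ w ^ 2)⁻¹) • DΦ) + (Φ w)⁻¹ • fderiv ℝ f w = 0 := by
      apply aux_clm_zero
      have H0 : (f w • ((-(Φ w ^ 2)⁻¹) • DΦ) + (Φ w)⁻¹ • fderiv ℝ f w)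
          (Pi.single (0 : Fin 3) 1) = 0 := by
        simp only [ContinuousLinearMap.add_apply, ContinuousLinearMap.smul_apply, smul_eq_mul]
        rw [hv0, show fderiv ℝ f w (Pi.single 0 1) = pderiv3 f 0 w from rfl, hd0]
        exact aux_cancel _ _ _ hΦn
      have H1 : (f w • ((-(Φ w ^ 2)⁻¹) • DΦ) + (Φ w)⁻¹ • fderiv ℝ f w)
          (Pi.single (1 : Fin 3) 1) = 0 := by
        simp only [ContinuousLinearMap.add_apply, ContinuousLinearMap.smul_apply, smul_eq_mul]
        rw [hv1, show fderiv ℝ f w (Pi.single 1 1) = pderiv3 f 1 w from rfl, hd1]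
        exact aux_cancel _ _ _ hΦn
      have H2 : (f w • ((-(Φ w ^ 2)⁻¹) • DΦ) + (Φ w)⁻¹ • fderiv ℝ f w)
          (Pi.single (2 : Fin 3) 1) = 0 := by
        simp only [ContinuousLinearMap.add_apply, ContinuousLinearMap.smul_apply, smul_eq_mul]
        rw [hv2, show fderiv ℝ f w (Pi.single 2 1) = pderiv3 f 2 w from rfl, hd2]
        exact aux_cancel _ _ _ hΦn
      intro k
      fin_cases k
      · exact H0
      · exact H1
      · exact H2
    rw [hzero] at hg
    exact hg
  -- conclude : f / Φ is constant on the convex open set D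
  have hgdiff : DifferentiableOn ℝ (fun w => f w * (Φ w)⁻¹) D := fun x hx =>
    (key x hx).differentiableAt.differentiableWithinAt
  have hgzero : ∀ x ∈ D, fderivWithin ℝ (fun w => f w * (Φ w)⁻¹) D x = 0 := fun x hx =>
    ((key x hx).hasFDerivWithinAt).fderivWithin (hDopen.uniqueDiffWithinAt hx)
  have hw₀ : (![2, 1, 0] : Fin 3 → ℝ) ∈ D := by
    refine ⟨by show (0:ℝ) < 1; norm_num, by norm_num⟩
  refine ⟨f ![2, 1, 0] * (Φ ![2, 1, 0])⁻¹, ?_⟩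
  intro w hw
  have hconst := hDconv.is_const_of_fderivWithin_eq_zero hgdiff hgzero hw hw₀
  have hΦnw : Φ w ≠ 0 := hΦne w hw
  have hfeq : f w = (f ![2, 1, 0] * (Φ ![2, 1, 0])⁻¹) * Φ w := by
    calc f w = f w * (Φ w)⁻¹ * Φ w := (inv_mul_cancel_right₀ hΦnw _).symm
      _ = (f ![2, 1, 0] * (Φ ![2, 1, 0])⁻¹) * Φ w := by rw [hconst]
  rw [hfeq, hΦdef]
  ring
end

section
/- Let h₁,…,h₄, j₁,…,j₄ ∈ ℂ, set p_i := h_i − j_i/2 and p̄ := (p₁+p₂+p₃+p₄)/3. Let f be a continuously differentiable complex-valued function on D = {(w₁,…,w₄) ∈ ℝ⁴ : w₁ > w₂ > w₃ > w₄} satisfying at every point of D: (i) ∑_{i=1}^{4} ∂_i f = 0; (ii) ∑_{i=1}^{4} (w_i ∂_i f + p_i f) = 0; (iii) ∑_{i=1}^{4} (w_i² ∂_i f + 2 p_i w_i f) = 0. Then there exists a function H : (0,1) → ℂ such that for all (w₁,…,w₄) ∈ D, f(w₁,…,w₄) = H(η) · ∏_{1≤a<b≤4} (w_a − w_b)^{p̄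 − p_a − p_b}, where η := (w₁−w₂)(w₃−w₄)/((w₁−w₃)(w₂−w₄)) (which lies in (0,1) on D). -/
/-- The partial derivative in the `i`-th direction of a function of four
real variables. -/
noncomputable def pderiv4 (F : (Fin 4 → ℝ) → ℂ) (i : Fin 4) (w : Fin 4 → ℝ) : ℂ :=
  fderiv ℝ F w (Pi.single i 1)

/-- The shifted weights `pᵢ = hᵢ - jᵢ/2`. -/
noncomputable def shiftedWt (h j : Fin 4 → ℂ) (i : Fin 4) : ℂ := h i - j i / 2

/-- The average `p̄ = (p₁ + p₂ + p₃ + p₄)/3` of the shifted weights. -/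
noncomputable def shiftedWtAvg (h j : Fin 4 → ℂ) : ℂ := (∑ i, shiftedWt h j i) / 3

/-- The Ward-identity prefactor `∏_{a<b} (w_a - w_b)^(p̄ - p_a - p_b)`. -/
noncomputable def wardPrefactor (h j : Fin 4 → ℂ) (w : Fin 4 → ℝ) : ℂ :=
  ∏ a : Fin 4, ∏ b : Fin 4,
    if a < b then
      ((w a - w b : ℝ) : ℂ) ^ (shiftedWtAvg h j - shiftedWt h j a - shiftedWt h j b)
    else 1

/-- The cross-ratio `η = (w₁-w₂)(w₃-w₄)/((w₁-w₃)(w₂-w₄))`. -/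
noncomputable def crossRatio (w : Fin 4 → ℝ) : ℝ :=
  ((w 0 - w 1) * (w 2 - w 3)) / ((w 0 - w 2) * (w 1 - w 3))

set_option maxHeartbeats 1000000

abbrev Dset : Set (Fin 4 → ℝ) := {w : Fin 4 → ℝ | w 3 < w 2 ∧ w 2 < w 1 ∧ w 1 < w 0}

lemma isOpen_Dset : IsOpen Dset :=
  ((isOpen_lt (continuous_apply 3) (continuous_apply 2)).and
    ((isOpen_lt (continuous_apply 2) (continuous_apply 1)).and
      (isOpen_lt (continuous_apply 1) (continuous_apply 0))))

lemma Dset_lt {w : Fin 4 → ℝ} (hw : w ∈ Dset) : ∀ a b : Fin 4, a < b → w b < w a := by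
  obtain ⟨h1, h2, h3⟩ := hw
  intro a b hab
  fin_cases a <;> fin_cases b <;> simp_all <;> linarith

/-- The logarithm of the Ward prefactor. -/
noncomputable def LL (h j : Fin 4 → ℂ) (w : Fin 4 → ℝ) : ℂ :=
  ∑ a : Fin 4, ∑ b : Fin 4, if a < b then
    (Real.log (w a - w b) : ℂ) * (shiftedWtAvg h j - shiftedWt h j a - shiftedWt h j b) else 0

lemma prefactor_eq (h j : Fin 4 → ℂ) {w : Fin 4 → ℝ} (hw : w ∈ Dset) :
    wardPrefactor h j w = Complex.exp (LL h j w) := by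
  rw [wardPrefactor, LL]
  rw [Complex.exp_sum]
  refine Finset.prod_congr rfl fun a _ => ?_
  rw [Complex.exp_sum]
  refine Finset.prod_congr rfl fun b _ => ?_
  by_cases hab : a < b
  · simp only [hab, if_true]
    have hpos : (0:ℝ) < w a - w b := sub_pos.2 (Dset_lt hw a b hab)
    rw [Complex.cpow_def_of_ne_zero (by exact_mod_cast ne_of_gt hpos),
      Complex.ofReal_log hpos.le]
  · simp [hab]

lemma sum_pairs (T : Fin 4 → Fin 4 → ℂ) :
    (∑ a : Fin 4, ∑ b : Fin 4, if a < b then T a b else 0)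
      = T 0 1 + T 0 2 + T 0 3 + T 1 2 + T 1 3 + T 2 3 := by
  simp only [Fin.sum_univ_four,
    show ((0:Fin 4)<1) from by decide, show ((0:Fin 4)<2) from by decide,
    show ((0:Fin 4)<3) from by decide, show ((1:Fin 4)<2) from by decide,
    show ((1:Fin 4)<3) from by decide, show ((2:Fin 4)<3) from by decide,
    show ¬((0:Fin 4)<0) from by decide, show ¬((1:Fin 4)<0) from by decide,
    show ¬((1:Fin 4)<1) from by decide, show ¬((2:Fin 4)<0) from by decide,
    show ¬((2:Fin 4)<1) from by decide, show ¬((2:Fin 4)<2) from by decide,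
    show ¬((3:Fin 4)<0) from by decide, show ¬((3:Fin 4)<1) from by decide,
    show ¬((3:Fin 4)<2) from by decide, show ¬((3:Fin 4)<3) from by decide,
    if_true, if_false]
  ring

lemma ward_comb (h j : Fin 4 → ℂ) (f : (Fin 4 → ℝ) → ℂ)
    (hW1 : ∀ w ∈ Dset, ∑ i, pderiv4 f i w = 0)
    (hW2 : ∀ w ∈ Dset, ∑ i, ((w i : ℂ) * pderiv4 f i w + shiftedWt h j i * f w) = 0)
    (hW3 : ∀ w ∈ Dset,
      ∑ i, ((w i : ℂ) ^ 2 * pderiv4 f i w + 2 * shiftedWt h j i * (w i : ℂ) * f w) = 0)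
    {w : Fin 4 → ℝ} (hw : w ∈ Dset) (c1 c2 c3 : ℝ) :
    ∑ i, ((c1 + c2 * w i + c3 * (w i)^2 : ℝ) : ℂ) * pderiv4 f i w
      = -((c2:ℂ) * (∑ i, shiftedWt h j i)
          + 2*(c3:ℂ) * ∑ i, shiftedWt h j i * (w i:ℂ)) * f w := by
  have h1 := hW1 w hw
  have h2 := hW2 w hw
  have h3 := hW3 w hw
  simp only [Fin.sum_univ_four] at h1 h2 h3 ⊢
  push_cast
  linear_combination (c1:ℂ) * h1 + (c2:ℂ) * h2 + (c3:ℂ) * h3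

lemma B_comb (h j : Fin 4 → ℂ) {w : Fin 4 → ℝ} (hw : w ∈ Dset) (c1 c2 c3 : ℝ) :
    ∑ a : Fin 4, ∑ b : Fin 4, (if a < b then
        ((((c1 + c2 * w a + c3 * (w a)^2) - (c1 + c2 * w b + c3 * (w b)^2))
            / (w a - w b) : ℝ) : ℂ)
          * (shiftedWtAvg h j - shiftedWt h j a - shiftedWt h j b) else 0)
      = -((c2:ℂ) * (∑ i, shiftedWt h j i)
          + 2*(c3:ℂ) * ∑ i, shiftedWt h j i * (w i:ℂ)) := by
  have hq : ∀ a b : Fin 4, a < b →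
      ((c1 + c2 * w a + c3 * (w a)^2) - (c1 + c2 * w b + c3 * (w b)^2))
        / (w a - w b) = c2 + c3 * (w a + w b) := by
    intro a b hab
    have hne : w a - w b ≠ 0 := ne_of_gt (sub_pos.2 (Dset_lt hw a b hab))
    field_simp
    ring
  rw [sum_pairs]
  rw [hq 0 1 (by decide), hq 0 2 (by decide), hq 0 3 (by decide),
    hq 1 2 (by decide), hq 1 3 (by decide), hq 2 3 (by decide)]
  simp only [shiftedWtAvg, Fin.sum_univ_four]
  push_cast
  ring

lemma const_of_hasDerivAt_zero {F : ℝ → ℂ} {a b : ℝ}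
    (hF : ∀ s ∈ Set.uIcc a b, HasDerivAt F 0 s) : F a = F b := by
  rcases le_total a b with hab | hab
  · rw [Set.uIcc_of_le hab] at hF
    have := constant_of_has_deriv_right_zero
      (f := F) (a := a) (b := b)
      (fun x hx => (hF x hx).continuousAt.continuousWithinAt)
      (fun x hx => (hF x (Set.mem_Icc_of_Ico hx)).hasDerivWithinAt)
    exact (this b (Set.right_mem_Icc.2 hab)).symm
  · rw [Set.uIcc_of_ge hab] at hF
    have := constant_of_has_deriv_right_zero
      (f := F) (a := b) (b := a)
      (fun x hx => (hF x hx).continuousAt.continuousWithinAt)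
      (fun x hx => (hF x (Set.mem_Icc_of_Ico hx)).hasDerivWithinAt)
    exact this a (Set.right_mem_Icc.2 hab)

lemma master (h j : Fin 4 → ℂ) (f : (Fin 4 → ℝ) → ℂ)
    (hf : ContDiffOn ℝ 1 f Dset)
    (hW1 : ∀ w ∈ Dset, ∑ i, pderiv4 f i w = 0)
    (hW2 : ∀ w ∈ Dset, ∑ i, ((w i : ℂ) * pderiv4 f i w + shiftedWt h j i * f w) = 0)
    (hW3 : ∀ w ∈ Dset,
      ∑ i, ((w i : ℂ) ^ 2 * pderiv4 f i w + 2 * shiftedWt h j i * (w i : ℂ) * f w) = 0)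
    (γ : ℝ → Fin 4 → ℝ) (s : ℝ) (c1 c2 c3 : ℝ) (v : Fin 4 → ℝ)
    (hmem : γ s ∈ Dset)
    (hγ : ∀ i, HasDerivAt (fun u => γ u i) (v i) s)
    (hv : ∀ i, v i = c1 + c2 * γ s i + c3 * (γ s i)^2) :
    HasDerivAt (fun u => f (γ u) * Complex.exp (-(LL h j (γ u)))) 0 s := by
  have hd : DifferentiableAt ℝ f (γ s) :=
    (hf.differentiableOn one_ne_zero).differentiableAt (isOpen_Dset.mem_nhds hmem)
  have hγpi : HasDerivAt γ v s := hasDerivAt_pi.2 hγ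
  have hfd : HasDerivAt (fun u => f (γ u)) (fderiv ℝ f (γ s) v) s :=
    (hd.hasFDerivAt).comp_hasDerivAt s hγpi
  have hlin : fderiv ℝ f (γ s) v = ∑ i, (v i : ℂ) * pderiv4 f i (γ s) := by
    have hv' : v = ∑ i : Fin 4, v i • (Pi.single i 1 : Fin 4 → ℝ) := by
      funext k
      simp [Pi.single_apply]
    conv_lhs => rw [hv']
    rw [map_sum]
    refine Finset.sum_congr rfl fun i _ => ?_
    rw [map_smul, pderiv4, Complex.real_smul]
  have hLd : HasDerivAt (fun u => LL h j (γ u))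
      (∑ a : Fin 4, ∑ b : Fin 4, (if a < b then
        (((v a - v b) / (γ s a - γ s b) : ℝ) : ℂ)
          * (shiftedWtAvg h j - shiftedWt h j a - shiftedWt h j b) else 0)) s := by
    simp only [LL]
    apply HasDerivAt.fun_sum
    intro a _
    apply HasDerivAt.fun_sum
    intro b _
    by_cases hab : a < b
    · simp only [hab, if_true]
      have hpos : (0:ℝ) < γ s a - γ s b := sub_pos.2 (Dset_lt hmem a b hab)
      have h1 : HasDerivAt (fun u => γ u a - γ u b) (v a - v b) s := (hγ a).sub (hγ b)
      exact ((h1.log (ne_of_gt hpos)).ofReal_comp).mul_const _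
    · simp only [hab, if_false]
      exact hasDerivAt_const _ _
  have hexp := (hLd.neg).cexp
  have hmul := hfd.fun_mul hexp
  refine hmul.congr_deriv ?_
  rw [hlin]
  have e1 : ∑ i, (v i : ℂ) * pderiv4 f i (γ s)
      = -((c2:ℂ) * (∑ i, shiftedWt h j i)
          + 2*(c3:ℂ) * ∑ i, shiftedWt h j i * (γ s i:ℂ)) * f (γ s) := by
    rw [← ward_comb h j f hW1 hW2 hW3 hmem c1 c2 c3]
    refine Finset.sum_congr rfl fun i _ => ?_
    rw [hv i]
  have e2 : (∑ a : Fin 4, ∑ b : Fin 4, (if a < b then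
        (((v a - v b) / (γ s a - γ s b) : ℝ) : ℂ)
          * (shiftedWtAvg h j - shiftedWt h j a - shiftedWt h j b) else 0))
      = -((c2:ℂ) * (∑ i, shiftedWt h j i)
          + 2*(c3:ℂ) * ∑ i, shiftedWt h j i * (γ s i:ℂ)) := by
    rw [← B_comb h j hmem c1 c2 c3]
    refine Finset.sum_congr rfl fun a _ => Finset.sum_congr rfl fun b _ => ?_
    by_cases hab : a < b
    · simp only [hab, if_true, hv a, hv b]
    · simp [hab]
  rw [e1, e2]
  ring

/-- Solving the Ward identities for a 4-point function of bosonic ghost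
primaries with charges `jᵢ` and weights `hᵢ`: any `C¹` solution on
`{w₁ > w₂ > w₃ > w₄}` is `H(η) ∏_{a<b} (w_a - w_b)^(p̄ - p_a - p_b)` for a
function `H` of the cross-ratio `η`, which lies in `(0,1)` on the domain. -/
theorem ghost_four_point_ward (h j : Fin 4 → ℂ) (f : (Fin 4 → ℝ) → ℂ)
    (hf : ContDiffOn ℝ 1 f {w : Fin 4 → ℝ | w 3 < w 2 ∧ w 2 < w 1 ∧ w 1 < w 0})
    (hW1 : ∀ w ∈ {w : Fin 4 → ℝ | w 3 < w 2 ∧ w 2 < w 1 ∧ w 1 < w 0},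
      ∑ i, pderiv4 f i w = 0)
    (hW2 : ∀ w ∈ {w : Fin 4 → ℝ | w 3 < w 2 ∧ w 2 < w 1 ∧ w 1 < w 0},
      ∑ i, ((w i : ℂ) * pderiv4 f i w + shiftedWt h j i * f w) = 0)
    (hW3 : ∀ w ∈ {w : Fin 4 → ℝ | w 3 < w 2 ∧ w 2 < w 1 ∧ w 1 < w 0},
      ∑ i, ((w i : ℂ) ^ 2 * pderiv4 f i w + 2 * shiftedWt h j i * (w i : ℂ) * f w) = 0) :
    ∃ H : ℝ → ℂ, ∀ w ∈ {w : Fin 4 → ℝ | w 3 < w 2 ∧ w 2 < w 1 ∧ w 1 < w 0},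
      crossRatio w ∈ Set.Ioo (0 : ℝ) 1 ∧
      f w = H (crossRatio w) * wardPrefactor h j w := by
  classical
  refine ⟨fun t => f ![1, 1 - Real.sqrt t, 0, -Real.sqrt t]
      * Complex.exp (-(LL h j ![1, 1 - Real.sqrt t, 0, -Real.sqrt t])), ?_⟩
  intro w hw
  obtain ⟨h32, h21, h10⟩ := hw
  have hw' : w ∈ Dset := ⟨h32, h21, h10⟩
  have d01 : (0:ℝ) < w 0 - w 1 := sub_pos.2 h10
  have d12 : (0:ℝ) < w 1 - w 2 := sub_pos.2 h21
  have d23 : (0:ℝ) < w 2 - w 3 := sub_pos.2 h32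
  have d02 : (0:ℝ) < w 0 - w 2 := by linarith
  have d13 : (0:ℝ) < w 1 - w 3 := by linarith
  have hηpos : 0 < crossRatio w :=
    div_pos (mul_pos d01 d23) (mul_pos d02 d13)
  have hηlt1 : crossRatio w < 1 := by
    rw [crossRatio, div_lt_one (mul_pos d02 d13)]
    nlinarith [mul_pos d01 d12, mul_pos d12 d23, mul_pos d12 d12]
  refine ⟨⟨hηpos, hηlt1⟩, ?_⟩
  obtain ⟨η, hηdef⟩ : ∃ x : ℝ, x = crossRatio w := ⟨_, rfl⟩
  rw [← hηdef] at hηpos hηlt1 ⊢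
  obtain ⟨r, hrdef⟩ : ∃ x : ℝ, x = Real.sqrt η := ⟨_, rfl⟩
  have hr2 : r^2 = η := by rw [hrdef]; exact Real.sq_sqrt hηpos.le
  have hr0 : 0 < r := by rw [hrdef]; exact Real.sqrt_pos.2 hηpos
  have hr1 : r < 1 := by nlinarith
  obtain ⟨A, hAdef⟩ : ∃ x : ℝ, x = w 0 - w 2 := ⟨_, rfl⟩
  have hA0 : 0 < A := by rw [hAdef]; exact d02
  obtain ⟨b, hbdef⟩ : ∃ x : ℝ, x = (w 1 - w 2)/A := ⟨_, rfl⟩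
  obtain ⟨dd, hddef⟩ : ∃ x : ℝ, x = (w 3 - w 2)/A := ⟨_, rfl⟩
  have hb0 : 0 < b := by rw [hbdef]; exact div_pos d12 hA0
  have hb1 : b < 1 := by
    rw [hbdef, div_lt_one hA0, hAdef]; linarith
  have hd0 : dd < 0 := by
    rw [hddef]; exact div_neg_of_neg_of_pos (by linarith) hA0
  have hη' : η * ((w 0 - w 2)*(w 1 - w 3)) = (w 0 - w 1)*(w 2 - w 3) := by
    rw [hηdef, crossRatio]
    field_simp
  have hbd : η * (b - dd) = (1 - b) * (-dd) := by
    rw [hbdef, hddef, hAdef]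
    have hne : w 0 - w 2 ≠ 0 := ne_of_gt d02
    field_simp
    linear_combination hη'
  have hbη : b + η < 1 := by nlinarith [mul_pos (sub_pos.2 hb1) hb0]
  obtain ⟨X, hXdef⟩ : ∃ x : ℝ, x = (1 - r)*(1 - b)/(r * b) := ⟨_, rfl⟩
  have hX0 : 0 < X := by
    rw [hXdef]
    exact div_pos (mul_pos (by linarith) (by linarith)) (mul_pos hr0 hb0)
  obtain ⟨sst, hsstdef⟩ : ∃ x : ℝ, x = Real.log X := ⟨_, rfl⟩
  have hXexp : Real.exp sst = X := by rw [hsstdef]; exact Real.exp_log hX0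
  have hXgt : r / (1 + r) < X := by
    rw [div_lt_iff₀ (by linarith), hXdef, div_mul_eq_mul_div,
      lt_div_iff₀ (mul_pos hr0 hb0)]
    nlinarith
  obtain ⟨c, hcdef⟩ : ∃ x : Fin 4 → ℝ, x = ![1, 1 - r, 0, -r] := ⟨_, rfl⟩
  have hc0 : c 0 = 1 := by rw [hcdef]; rfl
  have hc1 : c 1 = 1 - r := by rw [hcdef]; rfl
  have hc2 : c 2 = 0 := by rw [hcdef]; rfl
  have hc3 : c 3 = -r := by rw [hcdef]; rfl
  -- Step 1 : translation
  have step1 : f w * Complex.exp (-(LL h j w))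
      = f (fun i => w i - w 2) * Complex.exp (-(LL h j (fun i => w i - w 2))) := by
    have key := const_of_hasDerivAt_zero
      (F := fun u => f (fun i => w i - u * w 2)
        * Complex.exp (-(LL h j (fun i => w i - u * w 2)))) (a := 0) (b := 1) ?_
    · have e0 : (fun i => w i - 0 * w 2) = w := by funext i; ring
      have e1 : (fun i => w i - 1 * w 2) = (fun i => w i - w 2) := by funext i; ring
      simpa only [e0, e1] using key
    · intro s _
      refine master h j f hf hW1 hW2 hW3 (fun u i => w i - u * w 2) s
        (-(1 * w 2)) 0 0 (fun _ => -(1 * w 2)) ?_ ?_ ?_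
      · refine ⟨?_, ?_, ?_⟩
        · show w 3 - s * w 2 < w 2 - s * w 2; linarith
        · show w 2 - s * w 2 < w 1 - s * w 2; linarith
        · show w 1 - s * w 2 < w 0 - s * w 2; linarith
      · intro i
        exact ((hasDerivAt_id s).mul_const (w 2)).const_sub (w i)
      · intro i
        show -(1 * w 2) = -(1 * w 2) + 0 * (w i - s * w 2) + 0 * (w i - s * w 2)^2
        ring
  -- Step 2 : scaling
  have step2 : f (fun i => w i - w 2) * Complex.exp (-(LL h j (fun i => w i - w 2)))
      = f (fun i => (w i - w 2)/A) * Complex.exp (-(LL h j (fun i => (w i - w 2)/A))) := by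
    have key := const_of_hasDerivAt_zero
      (F := fun u => f (fun i => Real.exp (-(u * Real.log A)) * (w i - w 2))
        * Complex.exp (-(LL h j (fun i => Real.exp (-(u * Real.log A)) * (w i - w 2)))))
      (a := 0) (b := 1) ?_
    · have e0 : (fun i => Real.exp (-(0 * Real.log A)) * (w i - w 2))
          = (fun i => w i - w 2) := by funext i; simp
      have e1 : (fun i => Real.exp (-(1 * Real.log A)) * (w i - w 2))
          = (fun i => (w i - w 2)/A) := by
        funext i
        rw [one_mul, Real.exp_neg, Real.exp_log hA0]
        ring
      simpa only [e0, e1] using key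
    · intro s _
      have hep : (0:ℝ) < Real.exp (-(s * Real.log A)) := Real.exp_pos _
      refine master h j f hf hW1 hW2 hW3
        (fun u i => Real.exp (-(u * Real.log A)) * (w i - w 2)) s
        0 (-(Real.log A)) 0
        (fun i => Real.exp (-(s * Real.log A)) * -(1 * Real.log A) * (w i - w 2)) ?_ ?_ ?_
      · refine ⟨?_, ?_, ?_⟩
        · show Real.exp (-(s * Real.log A)) * (w 3 - w 2)
            < Real.exp (-(s * Real.log A)) * (w 2 - w 2)
          exact mul_lt_mul_of_pos_left (by linarith) hep
        · show Real.exp (-(s * Real.log A)) * (w 2 - w 2)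
            < Real.exp (-(s * Real.log A)) * (w 1 - w 2)
          exact mul_lt_mul_of_pos_left (by linarith) hep
        · show Real.exp (-(s * Real.log A)) * (w 1 - w 2)
            < Real.exp (-(s * Real.log A)) * (w 0 - w 2)
          exact mul_lt_mul_of_pos_left (by linarith) hep
      · intro i
        exact (((hasDerivAt_id s).mul_const (Real.log A)).neg.exp).mul_const (w i - w 2)
      · intro i
        show Real.exp (-(s * Real.log A)) * -(1 * Real.log A) * (w i - w 2)
          = 0 + -(Real.log A) * (Real.exp (-(s * Real.log A)) * (w i - w 2))
            + 0 * (Real.exp (-(s * Real.log A)) * (w i - w 2))^2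
        ring
  -- Step 3 : special conformal flow
  have denpos : ∀ u ∈ Set.uIcc 0 sst, ∀ i, 0 < c i + (1 - c i) * Real.exp u := by
    intro u hu i
    have hrgt : r / (1 + r) < Real.exp u := by
      rcases le_total 0 sst with hc' | hc'
      · rw [Set.uIcc_of_le hc'] at hu
        have h1 : (1:ℝ) ≤ Real.exp u := by
          rw [show (1:ℝ) = Real.exp 0 from (Real.exp_zero).symm]
          exact Real.exp_le_exp.2 hu.1
        have h2 : r / (1 + r) < 1 := (div_lt_one (by linarith)).2 (by linarith)
        linarith
      · rw [Set.uIcc_of_ge hc'] at hu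
        have : X ≤ Real.exp u := by
          rw [← hXexp]; exact Real.exp_le_exp.2 hu.1
        linarith
    have hepos : (0:ℝ) < Real.exp u := Real.exp_pos _
    fin_cases i
    · show (0:ℝ) < c 0 + (1 - c 0) * Real.exp u
      rw [hc0]; simp
    · show (0:ℝ) < c 1 + (1 - c 1) * Real.exp u
      rw [hc1]; nlinarith
    · show (0:ℝ) < c 2 + (1 - c 2) * Real.exp u
      rw [hc2]; simpa using hepos
    · show (0:ℝ) < c 3 + (1 - c 3) * Real.exp u
      rw [hc3]
      have := (div_lt_iff₀ (show (0:ℝ) < 1 + r by linarith)).1 hrgt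
      nlinarith
  have step3 : f c * Complex.exp (-(LL h j c))
      = f (fun i => (w i - w 2)/A) * Complex.exp (-(LL h j (fun i => (w i - w 2)/A))) := by
    have key := const_of_hasDerivAt_zero
      (F := fun u => f (fun i => c i / (c i + (1 - c i) * Real.exp u))
        * Complex.exp (-(LL h j (fun i => c i / (c i + (1 - c i) * Real.exp u)))))
      (a := 0) (b := sst) ?_
    · have e0 : (fun i => c i / (c i + (1 - c i) * Real.exp 0)) = c := by
        funext i; rw [Real.exp_zero]; field_simp; ring
      have e1 : (fun i => c i / (c i + (1 - c i) * Real.exp sst))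
          = (fun i => (w i - w 2)/A) := by
        funext i
        rw [hXexp]
        fin_cases i
        · show c 0 / (c 0 + (1 - c 0) * X) = (w 0 - w 2)/A
          rw [hc0]
          rw [hAdef]; field_simp; ring
        · show c 1 / (c 1 + (1 - c 1) * X) = (w 1 - w 2)/A
          rw [hc1, ← hbdef, hXdef]
          have hden : (1-r) + (1-(1-r)) * ((1 - r)*(1 - b)/(r * b)) = (1-r)/b := by
            field_simp; ring
          rw [hden, div_div_eq_mul_div, mul_comm, mul_div_assoc,
            div_self (by linarith : (1:ℝ) - r ≠ 0), mul_one]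
        · show c 2 / (c 2 + (1 - c 2) * X) = (w 2 - w 2)/A
          rw [hc2]
          simp
        · show c 3 / (c 3 + (1 - c 3) * X) = (w 3 - w 2)/A
          rw [hc3, ← hddef, hXdef]
          have h1bη : (0:ℝ) < 1 - b - η := by linarith
          have hden0 : -r + (1-(-r)) * ((1 - r)*(1 - b)/(r * b)) = (1 - b - η)/(r*b) := by
            field_simp
            linear_combination -hr2
          rw [hden0, div_div_eq_mul_div,
            div_eq_iff (by positivity : ((1:ℝ) - b - η) ≠ 0)]
          linear_combination (-b) * hr2 - hbd
      rw [e0, e1] at key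
      exact key
    · intro s hs
      refine master h j f hf hW1 hW2 hW3
        (fun u i => c i / (c i + (1 - c i) * Real.exp u)) s
        0 (-1) 1
        (fun i => (0 * (c i + (1 - c i) * Real.exp s) - c i * ((1 - c i) * Real.exp s))
          / (c i + (1 - c i) * Real.exp s)^2) ?_ ?_ ?_
      · have p0 := denpos s hs 0
        have p1 := denpos s hs 1
        have p2 := denpos s hs 2
        have p3 := denpos s hs 3
        have hepos : (0:ℝ) < Real.exp s := Real.exp_pos _
        refine ⟨?_, ?_, ?_⟩
        · show c 3 / (c 3 + (1 - c 3) * Real.exp s) < c 2 / (c 2 + (1 - c 2) * Real.exp s)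
          rw [hc2, hc3]
          rw [hc3] at p3
          have hlt : -r / (-r + (1 - -r) * Real.exp s) < 0 :=
            div_neg_of_neg_of_pos (by linarith) p3
          have : (0:ℝ) / (0 + (1 - 0) * Real.exp s) = 0 := by simp
          rw [this]
          exact hlt
        · show c 2 / (c 2 + (1 - c 2) * Real.exp s) < c 1 / (c 1 + (1 - c 1) * Real.exp s)
          rw [hc1, hc2]
          rw [hc1] at p1
          have hgt : (0:ℝ) < (1-r) / ((1-r) + (1 - (1-r)) * Real.exp s) :=
            div_pos (by linarith) p1
          have : (0:ℝ) / (0 + (1 - 0) * Real.exp s) = 0 := by simp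
          rw [this]
          exact hgt
        · show c 1 / (c 1 + (1 - c 1) * Real.exp s) < c 0 / (c 0 + (1 - c 0) * Real.exp s)
          rw [hc0, hc1]
          rw [hc1] at p1
          have h1 : (1:ℝ) / (1 + (1 - 1) * Real.exp s) = 1 := by norm_num
          rw [h1, div_lt_one p1]
          nlinarith
      · intro i
        exact (hasDerivAt_const s (c i)).div
          (((Real.hasDerivAt_exp s).const_mul (1 - c i)).const_add (c i))
          (ne_of_gt (denpos s hs i))
      · intro i
        have hp := denpos s hs i
        show (0 * (c i + (1 - c i) * Real.exp s) - c i * ((1 - c i) * Real.exp s))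
            / (c i + (1 - c i) * Real.exp s)^2
          = 0 + -1 * (c i / (c i + (1 - c i) * Real.exp s))
            + 1 * (c i / (c i + (1 - c i) * Real.exp s))^2
        field_simp
        ring
  -- Assemble
  have hchain : f w * Complex.exp (-(LL h j w)) = f c * Complex.exp (-(LL h j c)) :=
    step1.trans (step2.trans step3.symm)
  rw [prefactor_eq h j hw']
  have hcc : (![1, 1 - Real.sqrt η, 0, -Real.sqrt η] : Fin 4 → ℝ) = c := by
    rw [hcdef, hrdef]
  show f w = f ![1, 1 - Real.sqrt η, 0, -Real.sqrt η]
      * Complex.exp (-(LL h j ![1, 1 - Real.sqrt η, 0, -Real.sqrt η]))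
      * Complex.exp (LL h j w)
  rw [hcc, ← hchain, mul_assoc, ← Complex.exp_add, neg_add_cancel,
    Complex.exp_zero, mul_one]
end

section
/- Let ℓ ∈ ℕ with ℓ ≥ 3, let j₁, j₂, j₃, C, C₁, C₂ ∈ ℂ with j₁ + j₂ + j₃ = ℓ, and set a := j₁ + j₂(ℓ−1) + (j₃ − (ℓ+1)/2)ℓ and b := j₁(ℓ−1) + j₂ + (j₃ − (ℓ+1)/2)ℓ. Suppose that C·(x − y)^{ℓ−1}·(a·x + b·y) = −j₂C₂·x^ℓ − j₁C₁·y^ℓ holds for all x, y ∈ ℂ. Then j₁C₁ = 0 and j₂C₂ = 0; moreover, if j₁ ≠ j₂ then C = 0. -/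
private lemma nat_pow_ineq : ∀ ℓ : ℕ, 3 ≤ ℓ → 3 * 2 ^ ℓ < 3 ^ ℓ := by
  intro ℓ hℓ
  induction ℓ, hℓ using Nat.le_induction with
  | base => norm_num
  | succ n hn ih =>
    calc 3 * 2 ^ (n + 1) = 2 * (3 * 2 ^ n) := by ring
    _ < 2 * 3 ^ n := by omega
    _ < 3 ^ (n + 1) := by have : 0 < 3 ^ n := Nat.pow_pos (show 0 < 3 by norm_num); omega

/-- The KZ constraint on 3-point constants with `ℓ ≥ 3` units of spectral
flow: the cross-terms produced by `(x - y)^(ℓ-1)` cannot be accommodated, so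
the 3-point constants must vanish: `j₁C₁ = 0`, `j₂C₂ = 0`, and `C = 0`
whenever `j₁ ≠ j₂`. -/
theorem ghost_three_point_vanishing (ℓ : ℕ) (hℓ : 3 ≤ ℓ) (j₁ j₂ j₃ C C₁ C₂ : ℂ)
    (hsum : j₁ + j₂ + j₃ = ℓ)
    (hid : ∀ x y : ℂ,
      C * (x - y) ^ (ℓ - 1)
          * ((j₁ + j₂ * (ℓ - 1) + (j₃ - (ℓ + 1) / 2) * ℓ) * x
            + (j₁ * (ℓ - 1) + j₂ + (j₃ - (ℓ + 1) / 2) * ℓ) * y)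
        = -(j₂ * C₂) * x ^ ℓ - (j₁ * C₁) * y ^ ℓ) :
    j₁ * C₁ = 0 ∧ j₂ * C₂ = 0 ∧ (j₁ ≠ j₂ → C = 0) := by
  have hℓ0 : ℓ ≠ 0 := by omega
  have hℓ1 : ℓ - 1 ≠ 0 := by omega
  have h10 := hid 1 0
  have h11 := hid 1 1
  have h21 := hid 2 1
  have h32 := hid 3 2
  rw [show ((1:ℂ) - 0) = 1 by ring, one_pow, zero_pow hℓ0] at h10
  rw [show ((1:ℂ) - 1) = 0 by ring, zero_pow hℓ1] at h11
  rw [show ((2:ℂ) - 1) = 1 by norm_num, one_pow] at h21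
  rw [show ((3:ℂ) - 2) = 1 by norm_num, one_pow] at h32
  -- key factor is nonzero
  have hK : (3:ℂ) ^ ℓ - 3 * 2 ^ ℓ + 3 ≠ 0 := by
    have h := nat_pow_ineq ℓ hℓ
    have hne : (3:ℕ) ^ ℓ + 3 ≠ 3 * 2 ^ ℓ := by omega
    intro hc
    apply hne
    have : ((3:ℕ) ^ ℓ + 3 : ℂ) = ((3 * 2 ^ ℓ : ℕ) : ℂ) := by push_cast; linear_combination hc
    exact_mod_cast this
  have hu : (j₂ * C₂) * ((3:ℂ) ^ ℓ - 3 * 2 ^ ℓ + 3) = 0 := by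
    linear_combination h32 - 2 * h21 + h10 - ((2:ℂ) ^ ℓ - 2) * h11
  have hu0 : j₂ * C₂ = 0 := by
    rcases mul_eq_zero.mp hu with h | h
    · exact h
    · exact absurd h hK
  have hv0 : j₁ * C₁ = 0 := by linear_combination h11 - hu0
  refine ⟨hv0, hu0, fun hne => ?_⟩
  have hC : C * ((j₂ - j₁) * ((ℓ:ℂ) - 2)) = 0 := by
    linear_combination 3 * h10 - h21 - (3 - (2:ℂ) ^ ℓ) * hu0 + hv0
  have hj : j₂ - j₁ ≠ 0 := sub_ne_zero.mpr (Ne.symm hne)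
  have hl2 : (ℓ:ℂ) - 2 ≠ 0 := by
    have : (ℓ:ℂ) ≠ 2 := by exact_mod_cast (by omega : ℓ ≠ 2)
    exact sub_ne_zero.mpr this
  rcases mul_eq_zero.mp hC with h | h
  · exact h
  · rcases mul_eq_zero.mp h with h' | h'
    · exact absurd h' hj
    · exact absurd h' hl2
end

section
/- Let j₃ ∈ ℂ and suppose that for every k ∈ ℤ we are given a differentiable function G_k : (0,1) → ℂ such that, for all k ∈ ℤ and all η ∈ (0,1): (i) G_k′(η) = ((j₃ + k)/η²)·G_{k+1}(η) and (ii) G_k(η) = (1/η)·G_{k+1}(η). Then there exists a single constant C ∈ ℂ such that G_k(η) = C·η^{j₃+k} for every k ∈ ℤ and η ∈ (0,1). -/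
open Set Complex

/-- A function with zero derivative on an open interval is constant there. -/
lemma const_of_deriv_zero_Ioo {f : ℝ → ℂ} {a b : ℝ}
    (h : ∀ x ∈ Ioo a b, HasDerivAt f 0 x) :
    ∀ x ∈ Ioo a b, ∀ y ∈ Ioo a b, f x = f y := by
  intro x hx y hy
  refine (convex_Ioo a b).is_const_of_fderivWithin_eq_zero
    (fun z hz => ((h z hz).differentiableAt).differentiableWithinAt) ?_ hx hy
  intro z hz
  rw [fderivWithin_of_isOpen isOpen_Ioo hz]
  have := (h z hz).hasFDerivAt.fderiv
  rw [this]
  ext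
  simp

/-- Derivative of `η ↦ (η:ℂ)^c` on the positive reals. -/
lemma hasDerivAt_real_cpow' {c : ℂ} {x : ℝ} (hx : 0 < x) :
    HasDerivAt (fun η : ℝ => (η : ℂ) ^ c) (c * (x : ℂ) ^ (c - 1)) x := by
  have h0 : ((x : ℂ)) ∈ Complex.slitPlane := by
    exact Or.inl (by simpa using hx)
  have := (Complex.hasStrictDerivAt_cpow_const (c := c) h0).hasDerivAt
  exact this.comp_ofReal

/-- Solving the coupled differential and algebraic KZ equations for the
specialised 4-point functions `G_k` of bosonic ghost primaries with one unit
of spectral flow: there is a single constant `C` with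
`G_k(η) = C η^(j₃ + k)` for all `k` and all `η ∈ (0,1)`. -/
theorem ghost_kz_l1_solution (j₃ : ℂ) (G : ℤ → ℝ → ℂ)
    (hKZ : ∀ k : ℤ, ∀ η ∈ Set.Ioo (0 : ℝ) 1,
      HasDerivAt (G k) (((j₃ + (k : ℂ)) / (η : ℂ) ^ 2) * G (k + 1) η) η)
    (hAlg : ∀ k : ℤ, ∀ η ∈ Set.Ioo (0 : ℝ) 1,
      G k η = (1 / (η : ℂ)) * G (k + 1) η) :
    ∃ C : ℂ, ∀ k : ℤ, ∀ η ∈ Set.Ioo (0 : ℝ) 1,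
      G k η = C * (η : ℂ) ^ (j₃ + (k : ℂ)) := by
  -- auxiliary function H k η = G k η * η^(-(j₃+k))
  set H : ℤ → ℝ → ℂ := fun k η => G k η * (η : ℂ) ^ (-(j₃ + (k : ℂ))) with hH
  -- H k is constant on Ioo 0 1
  have hderiv : ∀ k : ℤ, ∀ η ∈ Ioo (0 : ℝ) 1, HasDerivAt (H k) 0 η := by
    intro k η hη
    have hηpos : (0 : ℝ) < η := hη.1
    have hηne : (η : ℂ) ≠ 0 := by exact_mod_cast hηpos.ne'
    have h1 := hKZ k η hη
    have h2 := hasDerivAt_real_cpow' (c := -(j₃ + (k : ℂ))) hηpos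
    have h3 := h1.mul h2
    refine h3.congr_deriv ?_
    have hG : G (k + 1) η = (η : ℂ) * G k η := by
      have := hAlg k η hη
      field_simp at this ⊢
      linear_combination -this
    rw [hG]
    have hpow : (η : ℂ) ^ (-(j₃ + (k : ℂ)) - 1) = (η : ℂ) ^ (-(j₃ + (k : ℂ))) / η := by
      rw [Complex.cpow_sub _ _ hηne, Complex.cpow_one]
    rw [hpow]
    field_simp
    ring
  have hconst : ∀ k : ℤ, ∀ x ∈ Ioo (0 : ℝ) 1, ∀ y ∈ Ioo (0 : ℝ) 1, H k x = H k y :=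
    fun k => const_of_deriv_zero_Ioo (hderiv k)
  -- H k = H (k+1) pointwise
  have hstep : ∀ k : ℤ, ∀ η ∈ Ioo (0 : ℝ) 1, H k η = H (k + 1) η := by
    intro k η hη
    have hηne : (η : ℂ) ≠ 0 := by exact_mod_cast hη.1.ne'
    simp only [hH]
    rw [hAlg k η hη]
    have : (-(j₃ + ((k : ℤ) + 1 : ℤ))) = -(j₃ + (k : ℂ)) - 1 := by push_cast; ring
    rw [this, Complex.cpow_sub _ _ hηne, Complex.cpow_one]
    field_simp
  -- hence H k η = H 0 η for all k
  have hallk : ∀ k : ℤ, ∀ η ∈ Ioo (0 : ℝ) 1, H k η = H 0 η := by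
    intro k
    induction k using Int.induction_on with
    | zero => intro η hη; rfl
    | succ n ih => intro η hη; rw [← hstep n η hη]; exact ih η hη
    | pred n ih => intro η hη; rw [hstep (-(n : ℤ) - 1) η hη]; simpa using ih η hη
  have hhalf : (1/2 : ℝ) ∈ Ioo (0 : ℝ) 1 := by norm_num
  refine ⟨H 0 (1/2), ?_⟩
  intro k η hη
  have hηne : (η : ℂ) ≠ 0 := by exact_mod_cast hη.1.ne'
  have : H k η = H 0 (1/2) := by
    rw [hallk k η hη]; exact hconst 0 η hη (1/2) hhalf
  have hpne : (η : ℂ) ^ (j₃ + (k : ℂ)) ≠ 0 := by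
    simp [Complex.cpow_eq_zero_iff, hηne]
  have hG : G k η = H k η * (η : ℂ) ^ (j₃ + (k : ℂ)) := by
    simp only [hH]
    rw [Complex.cpow_neg]
    field_simp
  rw [hG, this]
end
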